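/- Let G = (√5+1)/2 and 1 ≤ α ≤ G. Define h_α(x) = (3 log G)^{−1} times: 1/(x+G+1) for x ∈ [α−2, (1−α)/α); 1/(x+1) for x ∈ [(1−α)/α, (α−1)/(2−α)); and 1/(x+G−1) for x ∈ [(α−1)/(2−α), α). Then ∫_{α−2}^{α} h_α(x) dx = 1. -/

import Mathlib

open MeasureTheory intervalIntegral Set

/-- The invariant density h_α for 1 ≤ α ≤ G. -/
noncomputable def hDen (α x : ℝ) : ℝ :=
  let G : ℝ := (Real.sqrt 5 + 1)/2
  (3 * Real.log G)⁻¹ *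
    (if x < (1-α)/α then 1/(x+G+1)
     else if x < (α-1)/(2-α) then 1/(x+1)
     else 1/(x+G-1))

/-- For 1 ≤ α ≤ G the density h_α integrates to 1 over I_α = [α−2, α). -/
theorem stmt9 (α : ℝ) (h1 : 1 ≤ α) (h2 : α ≤ (Real.sqrt 5 + 1)/2) :
    ∫ x in (α-2)..α, hDen α x = 1 := by
  have hs2 : Real.sqrt 5 ^ 2 = 5 := Real.sq_sqrt (by norm_num)
  have hs0 : (0:ℝ) ≤ Real.sqrt 5 := Real.sqrt_nonneg 5
  have hsgt : (2:ℝ) < Real.sqrt 5 := by nlinarith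
  have hslt : Real.sqrt 5 < 3 := by nlinarith
  set s := Real.sqrt 5 with hsdef
  set G : ℝ := (s + 1)/2 with hGdef
  have hG1 : 1 < G := by rw [hGdef]; linarith
  have hG2 : G^2 = G + 1 := by rw [hGdef]; field_simp; nlinarith
  have hα0 : (0:ℝ) < α := by linarith
  have hα2 : α < 2 := by rw [hGdef] at h2; linarith
  set c1 : ℝ := (1-α)/α with hc1def
  set c2 : ℝ := (α-1)/(2-α) with hc2def
  set C : ℝ := (3 * Real.log G)⁻¹ with hCdef
  have hq : α^2 - α - 1 ≤ 0 := by
    have h2' : α ≤ G := h2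
    nlinarith [mul_nonneg (by rw [hGdef] at h2'; linarith : (0:ℝ) ≤ s - (2*α - 1))
      (by linarith : (0:ℝ) ≤ s + (2*α - 1))]
  have hc1nonpos : c1 ≤ 0 := by rw [hc1def, div_nonpos_iff]; right; constructor <;> linarith
  have hc2nonneg : 0 ≤ c2 := div_nonneg (by linarith) (by linarith)
  have hac1 : α - 2 ≤ c1 := by
    rw [hc1def, le_div_iff₀ hα0]; nlinarith
  have hc12 : c1 ≤ c2 := le_trans hc1nonpos hc2nonneg
  have hc2α : c2 ≤ α := by
    rw [hc2def, div_le_iff₀ (by linarith : (0:ℝ) < 2 - α)]; nlinarith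
  have hc1p1 : c1 + 1 = 1/α := by rw [hc1def]; field_simp; ring
  -- positivity of shifted endpoints
  have p1 : 0 < (α - 2) + (G + 1) := by rw [hGdef]; linarith
  have p2 : 0 < c1 + 1 := by rw [hc1p1]; positivity
  have p3 : 0 < c2 + (G - 1) := by linarith
  have hden_eq : ∀ x : ℝ, hDen α x =
      C * (if x < c1 then 1/(x+G+1) else if x < c2 then 1/(x+1) else 1/(x+G-1)) :=
    fun x => rfl
  -- generic piece lemma
  have key : ∀ a b k : ℝ, a ≤ b → 0 < a + k →
      (∀ᵐ x : ℝ, x ∈ Set.Ioc a b → hDen α x = C * (1/(x+k))) →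
      (∫ x in a..b, hDen α x) = C * Real.log ((b+k)/(a+k)) ∧
        IntervalIntegrable (hDen α) volume a b := by
    intro a b k hab hpos hcong
    have hbk : 0 < b + k := by linarith
    have hcong' : ∀ᵐ x : ℝ, x ∈ Set.uIoc a b → hDen α x = C * (1/(x+k)) := by
      filter_upwards [hcong] with x h hx
      exact h (by rwa [Set.uIoc_of_le hab] at hx)
    have hg_cont : ContinuousOn (fun x : ℝ => C * (1/(x+k))) (Set.uIcc a b) := by
      apply ContinuousOn.mul continuousOn_const
      apply ContinuousOn.div continuousOn_const (by fun_prop)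
      intro x hx
      rw [Set.uIcc_of_le hab] at hx
      have := hx.1
      exact ne_of_gt (by linarith)
    have hgint : IntervalIntegrable (fun x : ℝ => C * (1/(x+k))) volume a b :=
      hg_cont.intervalIntegrable
    have hae : (fun x : ℝ => C * (1/(x+k))) =ᵐ[volume.restrict (Set.uIoc a b)] hDen α := by
      have hmem := ae_restrict_mem (μ := volume) (measurableSet_uIoc : MeasurableSet (Set.uIoc a b))
      have h2' := ae_restrict_of_ae (μ := volume) (s := Set.uIoc a b) hcong'
      filter_upwards [hmem, h2'] with x hx hx2
      exact (hx2 hx).symm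
    refine ⟨?_, hgint.congr_ae hae⟩
    rw [intervalIntegral.integral_congr_ae hcong', intervalIntegral.integral_const_mul]
    congr 1
    rw [show (fun x : ℝ => 1/(x+k)) = fun x : ℝ => (fun y : ℝ => 1/y) (x+k) from rfl,
      intervalIntegral.integral_comp_add_right (fun y : ℝ => 1/y) k]
    apply integral_one_div
    intro h0
    rw [Set.uIcc_of_le (by linarith)] at h0
    have := h0.1
    linarith
  -- a.e. avoidance of single points
  have hne : ∀ c : ℝ, ∀ᵐ x : ℝ, x ≠ c := by
    intro c
    have h : {x : ℝ | ¬ x ≠ c} = {c} := by ext y; simp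
    rw [MeasureTheory.ae_iff, h]
    exact Real.volume_singleton
  have ae1 : ∀ᵐ x : ℝ, x ∈ Set.Ioc (α-2) c1 → hDen α x = C * (1/(x+(G+1))) := by
    filter_upwards [hne c1] with x hx hmem
    rw [hden_eq, if_pos (lt_of_le_of_ne hmem.2 hx)]
    ring_nf
  have ae2 : ∀ᵐ x : ℝ, x ∈ Set.Ioc c1 c2 → hDen α x = C * (1/(x+1)) := by
    filter_upwards [hne c2] with x hx hmem
    rw [hden_eq, if_neg (not_lt.2 hmem.1.le), if_pos (lt_of_le_of_ne hmem.2 hx)]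
  have ae3 : ∀ᵐ x : ℝ, x ∈ Set.Ioc c2 α → hDen α x = C * (1/(x+(G-1))) := by
    filter_upwards [] with x hmem
    rw [hden_eq, if_neg (not_lt.2 (le_trans hc1nonpos (le_trans hc2nonneg hmem.1.le))),
      if_neg (not_lt.2 hmem.1.le)]
    ring_nf
  obtain ⟨e1, i1⟩ := key (α-2) c1 (G+1) hac1 p1 ae1
  obtain ⟨e2, i2⟩ := key c1 c2 1 hc12 p2 ae2
  obtain ⟨e3, i3⟩ := key c2 α (G-1) hc2α p3 ae3
  rw [← intervalIntegral.integral_add_adjacent_intervals i1 (i2.trans i3),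
    ← intervalIntegral.integral_add_adjacent_intervals i2 i3, e1, e2, e3]
  have hr1 : 0 < (c1+(G+1))/((α-2)+(G+1)) := div_pos (by linarith) p1
  have hr2 : 0 < (c2+1)/(c1+1) := div_pos (by linarith) p2
  have hr3 : 0 < (α+(G-1))/(c2+(G-1)) := div_pos (by linarith) p3
  have hkey : 1 + α*G = G^3 * (2*α + 2*G - 3 - G*α) := by
    linear_combination (α*(G^2-G) - 2*G^2 + G - 1) * hG2
  have hpos4 : 0 < 2*α + 2*G - 3 - G*α := by
    have h2α'' : (2:ℝ) - α ≠ 0 := by intro h; linarith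
    have h : 2*α + 2*G - 3 - G*α = (2-α)*(c2+(G-1)) := by
      rw [hc2def]; field_simp; ring
    rw [h]; exact mul_pos (by linarith) p3
  have hA : c1 + (G+1) = (1 + α*G)/α := by
    rw [hc1def]; field_simp; ring
  have hB : c2 + 1 = 1/(2-α) := by
    rw [hc2def]
    rw [div_add' _ _ _ (by linarith : (2:ℝ)-α ≠ 0)]
    norm_num
  have hC : c2 + (G-1) = (2*α + 2*G - 3 - G*α)/(2-α) := by
    have h2α'' : (2:ℝ) - α ≠ 0 := by intro h; linarith
    rw [hc2def]; field_simp; ring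
  have hprod : ((c1+(G+1))/((α-2)+(G+1))) * (((c2+1)/(c1+1)) * ((α+(G-1))/(c2+(G-1)))) = G^3 := by
    rw [hA, hB, hC, hc1p1]
    have hα' : α ≠ 0 := ne_of_gt hα0
    have h2α' : (2:ℝ) - α ≠ 0 := by intro h; linarith
    have hne1 : (α - 2) + (G+1) ≠ 0 := ne_of_gt p1
    have hne4 : 2*α + 2*G - 3 - G*α ≠ 0 := ne_of_gt hpos4
    clear_value C c2 c1 G s
    rw [hkey]
    have e : α - 2 + (G+1) = α + (G-1) := by ring
    rw [e]
    have hne5 : α + (G-1) ≠ 0 := e ▸ hne1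
    field_simp
    exact div_self (fun h => hne4 (by linarith))
  rw [← mul_add, ← mul_add,
    ← Real.log_mul (ne_of_gt hr2) (ne_of_gt hr3),
    ← Real.log_mul (ne_of_gt hr1) (ne_of_gt (mul_pos hr2 hr3)), hprod, hCdef,
    Real.log_pow]
  have hlog : Real.log G ≠ 0 := ne_of_gt (Real.log_pos hG1)
  push_cast
  field_simp
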